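/- Let $X_i = AS_i + H_i$ with $A$ invertible and the processes $(S_i)$ and $(H_i)$ independent of each other. Fix a lag $\tau$ and indices $k, l$ with $\operatorname{Cov}(H_k, H_{k-\tau}) = \operatorname{Cov}(H_l, H_{l-\tau})$. If $\operatorname{Cov}(S_k, S_{k-\tau})$ and $\operatorname{Cov}(S_l, S_{l-\tau})$ are diagonal, then with $V = A^{-1}$, $V(\operatorname{Cov}(X_k, X_{k-\tau}) - \operatorname{Cov}(X_l, X_{l-\tau}))V^\top$ equals $\operatorname{Cov}(S_k, S_{k-\tau}) - \operatorname{Cov}(S_l, S_{l-\tau})$ and is diagonal. -/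

import Mathlib

open Matrix MeasureTheory ProbabilityTheory

/-- Cross-covariance matrix `Cov(X, Y)` of two `ℝ^d`-valued random vectors. -/
noncomputable def covMat {Ω : Type*} [MeasurableSpace Ω] (μ : Measure Ω) {d : ℕ}
    (X Y : Ω → Fin d → ℝ) : Matrix (Fin d) (Fin d) ℝ :=
  Matrix.of fun i j =>
    ∫ ω, (X ω i - ∫ ω', X ω' i ∂μ) * (Y ω j - ∫ ω', Y ω' j ∂μ) ∂μ

namespace Stmt4Aux

variable {Ω : Type*} [MeasurableSpace Ω] {μ : Measure Ω} [IsProbabilityMeasure μ]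

lemma l2_mul_integrable {f g : Ω → ℝ} (hf : MemLp f 2 μ) (hg : MemLp g 2 μ) :
    Integrable (fun ω => f ω * g ω) μ := by
  rw [← memLp_one_iff_integrable]
  have h := hg.smul (φ := f) (p := 2) (r := 1) hf
  exact h

lemma centered_memL2 {f : Ω → ℝ} (hf : MemLp f 2 μ) :
    MemLp (fun ω => f ω - ∫ ω', f ω' ∂μ) 2 μ :=
  hf.sub (memLp_const _)

lemma integral_centered {f : Ω → ℝ} (hf : MemLp f 2 μ) :
    ∫ ω, (f ω - ∫ ω', f ω' ∂μ) ∂μ = 0 := by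
  rw [integral_sub (hf.integrable one_le_two) (integrable_const _),
    integral_const]
  simp

/-- Bilinear expansion of the integral of a product of two finite linear
combinations of `L²` functions. -/
lemma integral_bilinear {ι κ : Type*} [Fintype ι] [Fintype κ]
    (f : ι → Ω → ℝ) (g : κ → Ω → ℝ) (a : ι → ℝ) (b : κ → ℝ)
    (hf : ∀ m, MemLp (f m) 2 μ) (hg : ∀ n, MemLp (g n) 2 μ) :
    ∫ ω, (∑ m, a m * f m ω) * (∑ n, b n * g n ω) ∂μ
      = ∑ m, ∑ n, a m * b n * ∫ ω, f m ω * g n ω ∂μ := by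
  have key : ∀ ω, (∑ m, a m * f m ω) * (∑ n, b n * g n ω)
      = ∑ m, ∑ n, a m * b n * (f m ω * g n ω) := by
    intro ω
    rw [Finset.sum_mul_sum]
    exact Finset.sum_congr rfl fun m _ => Finset.sum_congr rfl fun n _ => by ring
  simp_rw [key]
  rw [integral_finset_sum _ fun m _ => integrable_finset_sum _ fun n _ =>
    ((l2_mul_integrable (hf m) (hg n)).const_mul _)]
  refine Finset.sum_congr rfl fun m _ => ?_
  rw [integral_finset_sum _ fun n _ => ((l2_mul_integrable (hf m) (hg n)).const_mul _)]
  exact Finset.sum_congr rfl fun n _ => integral_const_mul _ _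

/-- Cross-covariance of component functions of independent random vectors is zero. -/
lemma covMat_zero_of_indep {d : ℕ} {S H : Ω → Fin d → ℝ}
    (hS2 : ∀ i, MemLp (fun ω => S ω i) 2 μ) (hH2 : ∀ i, MemLp (fun ω => H ω i) 2 μ)
    (hindep : IndepFun S H μ) : covMat μ S H = 0 := by
  ext i j
  show (∫ ω, (S ω i - ∫ ω', S ω' i ∂μ) * (H ω j - ∫ ω', H ω' j ∂μ) ∂μ) = 0
  have hfg : IndepFun (fun ω => S ω i - ∫ ω', S ω' i ∂μ)
      (fun ω => H ω j - ∫ ω', H ω' j ∂μ) μ :=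
    hindep.comp ((measurable_pi_apply i).sub measurable_const)
      ((measurable_pi_apply j).sub measurable_const)
  have := hfg.integral_mul_eq_mul_integral
    ((centered_memL2 (hS2 i)).integrable one_le_two).aestronglyMeasurable
    ((centered_memL2 (hH2 j)).integrable one_le_two).aestronglyMeasurable
  have h0 : ∫ ω, ((fun ω => S ω i - ∫ ω', S ω' i ∂μ) * fun ω => H ω j - ∫ ω', H ω' j ∂μ) ω ∂μ
      = ∫ ω, (S ω i - ∫ ω', S ω' i ∂μ) * (H ω j - ∫ ω', H ω' j ∂μ) ∂μ := rfl
  rw [← h0, this, integral_centered (hS2 i), zero_mul]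

/-- Expansion of covariance of affine transforms. -/
lemma covMat_affine {d : ℕ} (S Sτ H Hτ : Ω → Fin d → ℝ)
    (hS2 : ∀ i, MemLp (fun ω => S ω i) 2 μ) (hSτ2 : ∀ i, MemLp (fun ω => Sτ ω i) 2 μ)
    (hH2 : ∀ i, MemLp (fun ω => H ω i) 2 μ) (hHτ2 : ∀ i, MemLp (fun ω => Hτ ω i) 2 μ)
    (A : Matrix (Fin d) (Fin d) ℝ) :
    covMat μ (fun ω => A.mulVec (S ω) + H ω) (fun ω => A.mulVec (Sτ ω) + Hτ ω)
      = A * covMat μ S Sτ * Aᵀ + A * covMat μ S Hτ + covMat μ H Sτ * Aᵀ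
        + covMat μ H Hτ := by
  ext i j
  -- index type for the combined linear combination
  set mS : Fin d → ℝ := fun m => ∫ ω, S ω m ∂μ with hmS
  set mSτ : Fin d → ℝ := fun m => ∫ ω, Sτ ω m ∂μ with hmSτ
  set mH : Fin d → ℝ := fun m => ∫ ω, H ω m ∂μ with hmH
  set mHτ : Fin d → ℝ := fun m => ∫ ω, Hτ ω m ∂μ with hmHτ
  -- means of the transformed vectors
  have meanX : ∀ i, (∫ ω, (A.mulVec (S ω) + H ω) i ∂μ)
      = ∑ m, A i m * mS m + mH i := by
    intro i
    have : ∀ ω, (A.mulVec (S ω) + H ω) i = (∑ m, A i m * S ω m) + H ω i := by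
      intro ω; simp [Matrix.mulVec, dotProduct]
    simp_rw [this]
    rw [integral_add (integrable_finset_sum _ fun m _ =>
        ((hS2 m).integrable one_le_two).const_mul _) ((hH2 i).integrable one_le_two),
      integral_finset_sum _ fun m _ => ((hS2 m).integrable one_le_two).const_mul _]
    simp_rw [integral_const_mul]
    rfl
  have meanY : ∀ j, (∫ ω, (A.mulVec (Sτ ω) + Hτ ω) j ∂μ)
      = ∑ m, A j m * mSτ m + mHτ j := by
    intro j
    have : ∀ ω, (A.mulVec (Sτ ω) + Hτ ω) j = (∑ m, A j m * Sτ ω m) + Hτ ω j := by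
      intro ω; simp [Matrix.mulVec, dotProduct]
    simp_rw [this]
    rw [integral_add (integrable_finset_sum _ fun m _ =>
        ((hSτ2 m).integrable one_le_two).const_mul _) ((hHτ2 j).integrable one_le_two),
      integral_finset_sum _ fun m _ => ((hSτ2 m).integrable one_le_two).const_mul _]
    simp_rw [integral_const_mul]
    rfl
  -- centered functions indexed by a sum type
  classical
  let f : Fin d ⊕ Unit → Ω → ℝ := fun m => Sum.elim
    (fun m ω => S ω m - mS m) (fun _ ω => H ω i - mH i) m
  let g : Fin d ⊕ Unit → Ω → ℝ := fun n => Sum.elim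
    (fun n ω => Sτ ω n - mSτ n) (fun _ ω => Hτ ω j - mHτ j) n
  let a : Fin d ⊕ Unit → ℝ := Sum.elim (fun m => A i m) (fun _ => 1)
  let b : Fin d ⊕ Unit → ℝ := Sum.elim (fun n => A j n) (fun _ => 1)
  have hf : ∀ m, MemLp (f m) 2 μ := by
    rintro (m | _)
    · exact centered_memL2 (hS2 m)
    · exact centered_memL2 (hH2 i)
  have hg : ∀ n, MemLp (g n) 2 μ := by
    rintro (n | _)
    · exact centered_memL2 (hSτ2 n)
    · exact centered_memL2 (hHτ2 j)
  have hcX : ∀ ω, (A.mulVec (S ω) + H ω) i - (∫ ω', (A.mulVec (S ω') + H ω') i ∂μ)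
      = ∑ m, a m * f m ω := by
    intro ω
    rw [meanX i, Fintype.sum_sum_type]
    have : (A.mulVec (S ω) + H ω) i = (∑ m, A i m * S ω m) + H ω i := by
      simp [Matrix.mulVec, dotProduct]
    rw [this]
    simp only [a, f, Sum.elim_inl, Sum.elim_inr, Finset.univ_unique, Finset.sum_const,
      Finset.card_singleton, one_smul, one_mul, mul_sub]
    rw [Finset.sum_sub_distrib]
    ring
  have hcY : ∀ ω, (A.mulVec (Sτ ω) + Hτ ω) j - (∫ ω', (A.mulVec (Sτ ω') + Hτ ω') j ∂μ)
      = ∑ n, b n * g n ω := by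
    intro ω
    rw [meanY j, Fintype.sum_sum_type]
    have : (A.mulVec (Sτ ω) + Hτ ω) j = (∑ n, A j n * Sτ ω n) + Hτ ω j := by
      simp [Matrix.mulVec, dotProduct]
    rw [this]
    simp only [b, g, Sum.elim_inl, Sum.elim_inr, Finset.univ_unique, Finset.sum_const,
      Finset.card_singleton, one_smul, one_mul, mul_sub]
    rw [Finset.sum_sub_distrib]
    ring
  show (∫ ω, ((A.mulVec (S ω) + H ω) i - ∫ ω', (A.mulVec (S ω') + H ω') i ∂μ)
      * ((A.mulVec (Sτ ω) + Hτ ω) j - ∫ ω', (A.mulVec (Sτ ω') + Hτ ω') j ∂μ) ∂μ) = _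
  simp_rw [hcX, hcY]
  rw [integral_bilinear f g a b hf hg]
  rw [Fintype.sum_sum_type]
  have split : ∀ m : Fin d ⊕ Unit, (∑ n, a m * b n * ∫ ω, f m ω * g n ω ∂μ)
      = (∑ n : Fin d, a m * b (Sum.inl n) * ∫ ω, f m ω * g (Sum.inl n) ω ∂μ)
        + a m * b (Sum.inr ()) * ∫ ω, f m ω * g (Sum.inr ()) ω ∂μ := by
    intro m
    rw [Fintype.sum_sum_type]
    simp
  simp_rw [split]
  simp only [a, b, f, g, Sum.elim_inl, Sum.elim_inr, one_mul, mul_one,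
    Finset.univ_unique, Finset.sum_const, Finset.card_singleton, one_smul]
  have lhs_eq : ∀ i' j', (covMat μ S Sτ) i' j' = ∫ ω, (S ω i' - mS i') * (Sτ ω j' - mSτ j') ∂μ := fun _ _ => rfl
  show _ = (A * covMat μ S Sτ * Aᵀ + A * covMat μ S Hτ + covMat μ H Sτ * Aᵀ + covMat μ H Hτ) i j
  simp only [Matrix.add_apply, Matrix.mul_apply, Matrix.transpose_apply]
  have e1 : ∀ m n : Fin d, (covMat μ S Sτ) m n = ∫ ω, (S ω m - mS m) * (Sτ ω n - mSτ n) ∂μ := fun _ _ => rfl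
  have e2 : ∀ m : Fin d, (covMat μ S Hτ) m j = ∫ ω, (S ω m - mS m) * (Hτ ω j - mHτ j) ∂μ := fun _ => rfl
  have e3 : ∀ n : Fin d, (covMat μ H Sτ) i n = ∫ ω, (H ω i - mH i) * (Sτ ω n - mSτ n) ∂μ := fun _ => rfl
  have e4 : (covMat μ H Hτ) i j = ∫ ω, (H ω i - mH i) * (Hτ ω j - mHτ j) ∂μ := rfl
  simp only [e1, e2, e3, e4]
  rw [Finset.sum_add_distrib]
  have h1 : (∑ x : Fin d, ∑ y : Fin d,
        A i x * A j y * ∫ ω, (S ω x - mS x) * (Sτ ω y - mSτ y) ∂μ)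
      = ∑ x : Fin d, (∑ y : Fin d,
          A i y * ∫ ω, (S ω y - mS y) * (Sτ ω x - mSτ x) ∂μ) * A j x := by
    rw [Finset.sum_comm]
    refine Finset.sum_congr rfl fun x _ => ?_
    rw [Finset.sum_mul]
    exact Finset.sum_congr rfl fun y _ => by ring
  have h2 : (∑ x : Fin d, A j x * ∫ ω, (H ω i - mH i) * (Sτ ω x - mSτ x) ∂μ)
      = ∑ x : Fin d, (∫ ω, (H ω i - mH i) * (Sτ ω x - mSτ x) ∂μ) * A j x :=
    Finset.sum_congr rfl fun x _ => by ring
  rw [h1, h2]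
  ring

end Stmt4Aux

/-- Auto-covariance analog of the diagonalization identity: with group-wise stationary
lagged confounding covariance, differences of lagged observed covariances are
diagonalized by `V = A⁻¹`.  Here `Skτ`, `Hkτ`, ... stand for `S_{k-τ}`, `H_{k-τ}`, .... -/
theorem stmt4 {Ω : Type*} [MeasurableSpace Ω] (μ : Measure Ω) [IsProbabilityMeasure μ]
    {d : ℕ} (Sk Skτ Sl Slτ Hk Hkτ Hl Hlτ : Ω → Fin d → ℝ)
    (hmeas : Measurable Sk ∧ Measurable Skτ ∧ Measurable Sl ∧ Measurable Slτ ∧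
      Measurable Hk ∧ Measurable Hkτ ∧ Measurable Hl ∧ Measurable Hlτ)
    (hS2 : ∀ i, MemLp (fun ω => Sk ω i) 2 μ ∧ MemLp (fun ω => Skτ ω i) 2 μ ∧
      MemLp (fun ω => Sl ω i) 2 μ ∧ MemLp (fun ω => Slτ ω i) 2 μ)
    (hH2 : ∀ i, MemLp (fun ω => Hk ω i) 2 μ ∧ MemLp (fun ω => Hkτ ω i) 2 μ ∧
      MemLp (fun ω => Hl ω i) 2 μ ∧ MemLp (fun ω => Hlτ ω i) 2 μ)
    (hindepk : IndepFun (fun ω => (Sk ω, Skτ ω)) (fun ω => (Hk ω, Hkτ ω)) μ)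
    (hindepl : IndepFun (fun ω => (Sl ω, Slτ ω)) (fun ω => (Hl ω, Hlτ ω)) μ)
    (hstat : covMat μ Hk Hkτ = covMat μ Hl Hlτ)
    (hdiagk : (covMat μ Sk Skτ).IsDiag) (hdiagl : (covMat μ Sl Slτ).IsDiag)
    (A : Matrix (Fin d) (Fin d) ℝ) (hA : IsUnit A)
    (Xk Xkτ Xl Xlτ : Ω → Fin d → ℝ)
    (hXk : ∀ ω, Xk ω = A.mulVec (Sk ω) + Hk ω)
    (hXkτ : ∀ ω, Xkτ ω = A.mulVec (Skτ ω) + Hkτ ω)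
    (hXl : ∀ ω, Xl ω = A.mulVec (Sl ω) + Hl ω)
    (hXlτ : ∀ ω, Xlτ ω = A.mulVec (Slτ ω) + Hlτ ω)
    (V : Matrix (Fin d) (Fin d) ℝ) (hV : V = A⁻¹) :
    V * (covMat μ Xk Xkτ - covMat μ Xl Xlτ) * Vᵀ = covMat μ Sk Skτ - covMat μ Sl Slτ ∧
      (V * (covMat μ Xk Xkτ - covMat μ Xl Xlτ) * Vᵀ).IsDiag := by
  open Stmt4Aux in
  have hSk2 := fun i => (hS2 i).1
  have hSkτ2 := fun i => (hS2 i).2.1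
  have hSl2 := fun i => (hS2 i).2.2.1
  have hSlτ2 := fun i => (hS2 i).2.2.2
  have hHk2 := fun i => (hH2 i).1
  have hHkτ2 := fun i => (hH2 i).2.1
  have hHl2 := fun i => (hH2 i).2.2.1
  have hHlτ2 := fun i => (hH2 i).2.2.2
  -- cross independences
  have iSkHkτ : IndepFun Sk Hkτ μ := hindepk.comp measurable_fst measurable_snd
  have iHkSkτ : IndepFun Hk Skτ μ :=
    (hindepk.comp measurable_snd measurable_fst).symm
  have iSlHlτ : IndepFun Sl Hlτ μ := hindepl.comp measurable_fst measurable_snd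
  have iHlSlτ : IndepFun Hl Slτ μ :=
    (hindepl.comp measurable_snd measurable_fst).symm
  have z1 : covMat μ Sk Hkτ = 0 :=
    Stmt4Aux.covMat_zero_of_indep hSk2 hHkτ2 iSkHkτ
  have z2 : covMat μ Hk Skτ = 0 :=
    Stmt4Aux.covMat_zero_of_indep hHk2 hSkτ2 iHkSkτ
  have z3 : covMat μ Sl Hlτ = 0 :=
    Stmt4Aux.covMat_zero_of_indep hSl2 hHlτ2 iSlHlτ
  have z4 : covMat μ Hl Slτ = 0 :=
    Stmt4Aux.covMat_zero_of_indep hHl2 hSlτ2 iHlSlτ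
  have hXk' : Xk = fun ω => A.mulVec (Sk ω) + Hk ω := funext hXk
  have hXkτ' : Xkτ = fun ω => A.mulVec (Skτ ω) + Hkτ ω := funext hXkτ
  have hXl' : Xl = fun ω => A.mulVec (Sl ω) + Hl ω := funext hXl
  have hXlτ' : Xlτ = fun ω => A.mulVec (Slτ ω) + Hlτ ω := funext hXlτ
  have ek : covMat μ Xk Xkτ = A * covMat μ Sk Skτ * Aᵀ + covMat μ Hk Hkτ := by
    rw [hXk', hXkτ',
      Stmt4Aux.covMat_affine Sk Skτ Hk Hkτ hSk2 hSkτ2 hHk2 hHkτ2 A, z1, z2]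
    simp
  have el : covMat μ Xl Xlτ = A * covMat μ Sl Slτ * Aᵀ + covMat μ Hl Hlτ := by
    rw [hXl', hXlτ',
      Stmt4Aux.covMat_affine Sl Slτ Hl Hlτ hSl2 hSlτ2 hHl2 hHlτ2 A, z3, z4]
    simp
  set D : Matrix (Fin d) (Fin d) ℝ := covMat μ Sk Skτ - covMat μ Sl Slτ with hD
  have hdiff : covMat μ Xk Xkτ - covMat μ Xl Xlτ = A * D * Aᵀ := by
    rw [ek, el, hstat, hD]
    noncomm_ring
  have h1 : A⁻¹ * A = 1 := Matrix.nonsing_inv_mul A ((Matrix.isUnit_iff_isUnit_det A).mp hA)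
  have h2 : Aᵀ * A⁻¹ᵀ = 1 := by rw [← Matrix.transpose_mul, h1, Matrix.transpose_one]
  have key : V * (covMat μ Xk Xkτ - covMat μ Xl Xlτ) * Vᵀ = D := by
    rw [hdiff, hV, Matrix.mul_assoc A D Aᵀ, ← Matrix.mul_assoc A⁻¹ A (D * Aᵀ), h1,
      Matrix.one_mul, Matrix.mul_assoc D Aᵀ A⁻¹ᵀ, h2, Matrix.mul_one]
  refine ⟨key, ?_⟩
  rw [key]
  exact hdiagk.sub hdiagl
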